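/- Let δ ≥ 0 and m, n, i, j ≥ 0 be integers with m−n = i−j = δ, and let a₁, a₂ be complex numbers with Re(a₁·conj(a₂)) ≥ 0 (i.e. a₁ and a₂ lie in a common quarter-plane). Then for every integer α ≥ δ: |a₁/(α+m+1) + a₂/(α+i+1)|² ≥ ((α−δ+1)/(α+δ+1)) · |a₁/(α+n+1) + a₂/(α+j+1)|². (Theorem: if φ(z) = a₁z^m z̄^n + a₂z^i z̄^j with m−n = i−j = δ ≥ 0 and |arg(a₁) − arg(a₂)| ≤ π/2, then the Toeplitz operator T_φ on the Bergman space is hyponormal.) -/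

import Mathlib

private lemma abs_sq_add_div' (a b : ℂ) (r s : ℝ) (hr : r ≠ 0) (hs : s ≠ 0) :
    ‖a / (r:ℂ) + b / (s:ℂ)‖ ^ 2
      = Complex.normSq a / r^2 + Complex.normSq b / s^2
        + 2 * (a * starRingEnd ℂ b).re / (r*s) := by
  rw [Complex.sq_norm, Complex.normSq_add]
  have h1 : Complex.normSq (a / (r:ℂ)) = Complex.normSq a / r^2 := by
    rw [Complex.normSq_div, Complex.normSq_ofReal, sq]
  have h2 : Complex.normSq (b / (s:ℂ)) = Complex.normSq b / s^2 := by
    rw [Complex.normSq_div, Complex.normSq_ofReal, sq]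
  have h3 : (a / (r:ℂ) * starRingEnd ℂ (b / (s:ℂ))).re
      = (a * starRingEnd ℂ b).re / (r*s) := by
    rw [map_div₀, Complex.conj_ofReal]
    have : a / (r:ℂ) * (starRingEnd ℂ b / (s:ℂ))
        = (a * starRingEnd ℂ b) / ((r*s : ℝ) : ℂ) := by
      push_cast; ring
    rw [this, Complex.div_ofReal_re]
  rw [h1, h2, h3]; ring

private lemma aux_real (x y R p q P Q c : ℝ) (hx : 0 ≤ x) (hy : 0 ≤ y) (hR : 0 ≤ R)
    (hc : 0 ≤ c) (hp : 0 < p) (hq : 0 < q) (hP : 0 < P) (hQ : 0 < Q)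
    (h1 : c * p^2 ≤ P^2) (h2 : c * q^2 ≤ Q^2) :
    c * (x/P^2 + y/Q^2 + 2*R/(P*Q)) ≤ x/p^2 + y/q^2 + 2*R/(p*q) := by
  have h4 : (c*(p*q))^2 ≤ (P*Q)^2 := by nlinarith [mul_le_mul h1 h2 (by positivity) (by positivity)]
  have h3 : c*(p*q) ≤ P*Q := by nlinarith [mul_pos hP hQ, mul_pos hp hq, mul_nonneg hc (mul_pos hp hq).le]
  have t1 : c*(x/P^2) ≤ x/p^2 := by
    rw [mul_div_assoc' , div_le_div_iff₀ (by positivity) (by positivity)]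
    nlinarith [mul_le_mul_of_nonneg_left h1 hx]
  have t2 : c*(y/Q^2) ≤ y/q^2 := by
    rw [mul_div_assoc', div_le_div_iff₀ (by positivity) (by positivity)]
    nlinarith [mul_le_mul_of_nonneg_left h2 hy]
  have t3 : c*(2*R/(P*Q)) ≤ 2*R/(p*q) := by
    rw [mul_div_assoc', div_le_div_iff₀ (by positivity) (by positivity)]
    nlinarith [mul_le_mul_of_nonneg_left h3 hR]
  calc c * (x/P^2 + y/Q^2 + 2*R/(P*Q))
      = c*(x/P^2) + c*(y/Q^2) + c*(2*R/(P*Q)) := by ring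
    _ ≤ x/p^2 + y/q^2 + 2*R/(p*q) := by linarith

/-- A binomial symbol of fixed relative degree `δ` whose two coefficients lie in a
common quarter-plane (`Re(a₁·conj a₂) ≥ 0`) yields a hyponormal Toeplitz operator on
the Bergman space; via the Liu–Lu criterion this is the displayed inequality. -/
theorem quarter_plane_binomial_hyponormal (δ m n i j : ℕ)
    (hm : m = n + δ) (hi : i = j + δ) (a₁ a₂ : ℂ)
    (hre : 0 ≤ (a₁ * starRingEnd ℂ a₂).re) (α : ℕ) (hα : δ ≤ α) :
    ‖a₁ / ((α : ℂ) + m + 1) + a₂ / ((α : ℂ) + i + 1)‖ ^ 2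
      ≥ (((α : ℝ) - δ + 1) / ((α : ℝ) + δ + 1))
        * ‖a₁ / ((α : ℂ) + n + 1) + a₂ / ((α : ℂ) + j + 1)‖ ^ 2 := by
  subst hm hi
  set A : ℝ := (α : ℝ) with hA
  have hAδ : (δ : ℝ) ≤ A := by rw [hA]; exact_mod_cast hα
  have hδ0 : (0:ℝ) ≤ δ := Nat.cast_nonneg δ
  set p : ℝ := A + n + δ + 1 with hpd
  set q : ℝ := A + j + δ + 1 with hqd
  set P : ℝ := A + n + 1 with hPd
  set Q : ℝ := A + j + 1 with hQd
  have hn0 : (0:ℝ) ≤ (n:ℝ) := Nat.cast_nonneg n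
  have hj0 : (0:ℝ) ≤ (j:ℝ) := Nat.cast_nonneg j
  have hA0 : (0:ℝ) ≤ A := Nat.cast_nonneg α
  have hp : (0:ℝ) < p := by unfold p; linarith
  have hq : (0:ℝ) < q := by unfold q; linarith
  have hP : (0:ℝ) < P := by unfold P; linarith
  have hQ : (0:ℝ) < Q := by unfold Q; linarith
  set c : ℝ := (A - δ + 1) / (A + δ + 1) with hcd
  have hc : 0 ≤ c := by
    apply div_nonneg <;> [linarith; linarith]
  have hcle : c * (A + δ + 1) = A - δ + 1 := by
    rw [hcd, div_mul_cancel₀ _ (by linarith)]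
  have key1 : c * p^2 ≤ P^2 := by
    rw [hcd, div_mul_eq_mul_div, div_le_iff₀ (by linarith)]
    unfold p P
    nlinarith [sq_nonneg (δ:ℝ), mul_nonneg hn0 hδ0, mul_nonneg (mul_nonneg hn0 hn0) hδ0,
      mul_nonneg (mul_nonneg hn0 hδ0) hδ0, mul_nonneg hA0 (mul_nonneg hn0 hδ0)]
  have key2 : c * q^2 ≤ Q^2 := by
    rw [hcd, div_mul_eq_mul_div, div_le_iff₀ (by linarith)]
    unfold q Q
    nlinarith [sq_nonneg (δ:ℝ), mul_nonneg hj0 hδ0, mul_nonneg (mul_nonneg hj0 hj0) hδ0,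
      mul_nonneg (mul_nonneg hj0 hδ0) hδ0, mul_nonneg hA0 (mul_nonneg hj0 hδ0)]
  have e1 : ((α : ℂ) + ((n + δ : ℕ) : ℂ) + 1) = ((p : ℝ) : ℂ) := by
    unfold p A; push_cast; ring
  have e2 : ((α : ℂ) + ((j + δ : ℕ) : ℂ) + 1) = ((q : ℝ) : ℂ) := by
    unfold q A; push_cast; ring
  have e3 : ((α : ℂ) + (n : ℂ) + 1) = ((P : ℝ) : ℂ) := by
    unfold P A; push_cast; ring
  have e4 : ((α : ℂ) + (j : ℂ) + 1) = ((Q : ℝ) : ℂ) := by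
    unfold Q A; push_cast; ring
  rw [ge_iff_le, e1, e2, e3, e4,
    abs_sq_add_div' a₁ a₂ p q hp.ne' hq.ne',
    abs_sq_add_div' a₁ a₂ P Q hP.ne' hQ.ne']
  exact aux_real (Complex.normSq a₁) (Complex.normSq a₂) ((a₁ * starRingEnd ℂ a₂).re)
    p q P Q c (Complex.normSq_nonneg _) (Complex.normSq_nonneg _) hre hc hp hq hP hQ key1 key2
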